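/- Let ρ₁₂ be a pure density matrix (rank-one orthogonal projection) on ℂ^{d₁} ⊗ ℂ^{d₂} and σ₂₃ a pure density matrix on ℂ^{d₂} ⊗ ℂ^{d₃}, agreeing on the middle system: the partial trace of ρ₁₂ over the first factor equals the partial trace of σ₂₃ over the third factor. If there exists a density matrix ρ₁₂₃ on ℂ^{d₁} ⊗ ℂ^{d₂} ⊗ ℂ^{d₃} whose partial trace over the third factor is ρ₁₂ and whose partial trace over the first factor is σ₂₃, then ρ₁₂ and σ₂₃ are product states: ρ₁₂ = ρ₁ ⊗ ρ₂ and σ₂₃ = ρ₂ ⊗ ρ₃ for pure density matrices ρ₁, ρ₂, ρ₃ on the respective factors. -/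

import Mathlib

open Kronecker
open scoped ComplexOrder

section helpers

lemma sumNormSq_zero {α : Type*} [Fintype α] {f : α → ℂ}
    (h : ∑ a, (Complex.normSq (f a) : ℝ) = 0) : ∀ a, f a = 0 := by
  intro a
  have h0 : ∀ a ∈ Finset.univ, (0:ℝ) ≤ Complex.normSq (f a) := fun a _ => Complex.normSq_nonneg _
  exact Complex.normSq_eq_zero.mp ((Finset.sum_eq_zero_iff_of_nonneg h0).1 h a (Finset.mem_univ a))

lemma sum_mul_star_eq {n : Type*} [Fintype n] (u : n → ℂ) :
    ∑ i, u i * star (u i) = ((∑ i, Complex.normSq (u i) : ℝ) : ℂ) := by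
  push_cast
  exact Finset.sum_congr rfl fun i _ => Complex.mul_conj (u i)

lemma gram_factor {n α : Type*} [Fintype n] [Fintype α]
    (p : α → n → ℂ) (v : n → ℂ) (hv : v ≠ 0)
    (h : ∀ x y, ∑ a, p a x * star (p a y) = v x * star (v y)) :
    ∃ c : α → ℂ, ∀ a x, p a x = c a * v x := by
  classical
  set S : ℂ := ∑ x, v x * star (v x) with hS
  have hSr : S = ((∑ x, Complex.normSq (v x) : ℝ) : ℂ) := sum_mul_star_eq v
  have hS0 : S ≠ 0 := by
    rw [hSr]
    norm_cast
    intro hc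
    obtain ⟨x, hx⟩ := Function.ne_iff.mp hv
    exact hx (sumNormSq_zero hc x)
  have hstarS : star S = S := by
    rw [hSr]
    exact Complex.conj_ofReal _
  set N : α → ℂ := fun a => ∑ x, star (v x) * p a x with hN
  have key1 : ∑ a, N a * star (N a) = S * S := by
    have e1 : ∀ a, N a * star (N a)
        = ∑ x, ∑ y, (star (v x) * v y) * (p a x * star (p a y)) := by
      intro a
      rw [hN]
      simp only [star_sum, star_mul', star_star, Finset.sum_mul_sum]
      refine Finset.sum_congr rfl fun x _ => Finset.sum_congr rfl fun y _ => by ring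
    calc ∑ a, N a * star (N a)
        = ∑ a, ∑ x, ∑ y, (star (v x) * v y) * (p a x * star (p a y)) :=
            Finset.sum_congr rfl fun a _ => e1 a
      _ = ∑ x, ∑ y, (star (v x) * v y) * ∑ a, (p a x * star (p a y)) := by
            rw [Finset.sum_comm]
            refine Finset.sum_congr rfl fun x _ => ?_
            rw [Finset.sum_comm]
            refine Finset.sum_congr rfl fun y _ => ?_
            rw [Finset.mul_sum]
      _ = ∑ x, ∑ y, (v x * star (v x)) * (v y * star (v y)) := by
            refine Finset.sum_congr rfl fun x _ => Finset.sum_congr rfl fun y _ => ?_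
            rw [h x y]; ring
      _ = S * S := by rw [hS, Finset.sum_mul_sum]
  set c : α → ℂ := fun a => N a / S with hc
  have hstarN : ∀ a, star (N a) = ∑ x, v x * star (p a x) := by
    intro a
    rw [hN]
    simp only [star_sum, star_mul', star_star]
  have expand : ∀ a x, (p a x - c a * v x) * star (p a x - c a * v x)
      = p a x * star (p a x) - c a * (v x * star (p a x))
        - star (c a) * (star (v x) * p a x) + (c a * star (c a)) * (v x * star (v x)) := by
    intro a x
    simp only [star_sub, star_mul', star_star]
    ring
  have inner : ∀ a, ∑ x, (p a x - c a * v x) * star (p a x - c a * v x)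
      = (∑ x, p a x * star (p a x)) - c a * star (N a) - star (c a) * N a
        + (c a * star (c a)) * S := by
    intro a
    simp only [expand]
    rw [Finset.sum_add_distrib, Finset.sum_sub_distrib, Finset.sum_sub_distrib,
      ← Finset.mul_sum, ← Finset.mul_sum, ← Finset.mul_sum, ← hstarN a, hS, hN]
  have hTc : ∑ a, ∑ x, (p a x - c a * v x) * star (p a x - c a * v x) = 0 := by
    simp only [inner]
    rw [Finset.sum_add_distrib, Finset.sum_sub_distrib, Finset.sum_sub_distrib]
    have t1 : ∑ a, ∑ x, p a x * star (p a x) = S := by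
      rw [Finset.sum_comm, hS]
      exact Finset.sum_congr rfl fun x _ => h x x
    have t2 : ∑ a, c a * star (N a) = S := by
      have he : ∀ a, c a * star (N a) = N a * star (N a) / S := fun a => by
        rw [hc]; ring
      simp only [he]
      rw [← Finset.sum_div, key1, mul_div_assoc, div_self hS0, mul_one]
    have t3 : ∑ a, star (c a) * N a = S := by
      have he : ∀ a, star (c a) * N a = N a * star (N a) / S := fun a => by
        simp only [hc, star_div₀, hstarS]; ring
      simp only [he]
      rw [← Finset.sum_div, key1, mul_div_assoc, div_self hS0, mul_one]
    have t4 : ∑ a, (c a * star (c a)) * S = S := by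
      have he : ∀ a, (c a * star (c a)) * S = N a * star (N a) / S := fun a => by
        simp only [hc, star_div₀, hstarS]
        field_simp
      simp only [he]
      rw [← Finset.sum_div, key1, mul_div_assoc, div_self hS0, mul_one]
    rw [t1, t2, t3, t4]
    ring
  have hTr : ∑ a, ∑ x, (Complex.normSq (p a x - c a * v x) : ℝ) = 0 := by
    have hcast : ((∑ a, ∑ x, (Complex.normSq (p a x - c a * v x) : ℝ) : ℝ) : ℂ) = 0 := by
      push_cast
      rw [← hTc]
      exact Finset.sum_congr rfl fun a _ => Finset.sum_congr rfl fun x _ =>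
        (Complex.mul_conj _).symm
    exact_mod_cast hcast
  refine ⟨c, fun a x => ?_⟩
  have hnn : ∀ a ∈ Finset.univ, (0:ℝ) ≤ ∑ x, (Complex.normSq (p a x - c a * v x) : ℝ) :=
    fun a _ => Finset.sum_nonneg fun x _ => Complex.normSq_nonneg _
  have ha := (Finset.sum_eq_zero_iff_of_nonneg hnn).1 hTr a (Finset.mem_univ a)
  have hz := sumNormSq_zero ha x
  linear_combination (norm := ring_nf) hz

lemma rank_one_aux {n : Type*} [Fintype n] [DecidableEq n]
    (a : n → ℂ) (t : ℂ) (ha : a ≠ 0) (ht : t ≠ 0) :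
    (Matrix.of fun i j => t * (a i * star (a j))).rank = 1 := by
  classical
  set M : Matrix n n ℂ := Matrix.of fun i j => t * (a i * star (a j)) with hM
  have hmv : ∀ x : n → ℂ, M.mulVec x = (t * ∑ j, star (a j) * x j) • a := by
    intro x
    funext i
    simp only [Matrix.mulVec, dotProduct, hM, Matrix.of_apply, Pi.smul_apply, smul_eq_mul,
      Finset.mul_sum, Finset.sum_mul]
    exact Finset.sum_congr rfl fun j _ => by ring
  have hSa : (∑ j, star (a j) * a j) = ((∑ j, Complex.normSq (a j) : ℝ) : ℂ) := by
    push_cast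
    exact Finset.sum_congr rfl fun j _ => by rw [mul_comm]; exact Complex.mul_conj (a j)
  have hS0 : (∑ j, star (a j) * a j) ≠ 0 := by
    rw [hSa]
    norm_cast
    intro hzero
    apply ha
    funext j
    have h0 : ∀ j ∈ Finset.univ, (0:ℝ) ≤ Complex.normSq (a j) := fun j _ => Complex.normSq_nonneg _
    exact Complex.normSq_eq_zero.mp
      ((Finset.sum_eq_zero_iff_of_nonneg h0).1 hzero j (Finset.mem_univ j))
  have hamem : a ∈ LinearMap.range M.mulVecLin := by
    refine ⟨(t * ∑ j, star (a j) * a j)⁻¹ • a, ?_⟩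
    rw [Matrix.mulVecLin_apply, Matrix.mulVec_smul, hmv, smul_smul,
      inv_mul_cancel₀ (mul_ne_zero ht hS0), one_smul]
  rw [Matrix.rank, finrank_eq_one_iff']
  refine ⟨⟨a, hamem⟩, fun hcon => ha (congrArg Subtype.val hcon), ?_⟩
  rintro ⟨w, x, hx⟩
  refine ⟨t * ∑ j, star (a j) * x j, ?_⟩
  apply Subtype.ext
  show (t * ∑ j, star (a j) * x j) • a = w
  rw [← hx, Matrix.mulVecLin_apply, hmv]

end helpers

/-- A pure state: a rank-one orthogonal projection. -/
def IsPureState {m : Type*} [Fintype m] [DecidableEq m] (M : Matrix m m ℂ) : Prop :=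
  M.IsHermitian ∧ M * M = M ∧ M.rank = 1

lemma pure_of {n : Type*} [Fintype n] [DecidableEq n]
    (a : n → ℂ) (t : ℝ) (ha : a ≠ 0) (ht : t ≠ 0)
    (hnorm : (t:ℂ) * ∑ i, a i * star (a i) = 1) :
    IsPureState (Matrix.of fun i j => (t:ℂ) * (a i * star (a j))) := by
  refine ⟨?_, ?_, rank_one_aux a t ha (by exact_mod_cast ht)⟩
  · ext i j
    simp only [Matrix.conjTranspose_apply, Matrix.of_apply, star_mul', star_star,
      Complex.star_def, Complex.conj_ofReal, Complex.conj_conj]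
    ring
  · ext i j
    simp only [Matrix.mul_apply, Matrix.of_apply]
    calc ∑ k, (t:ℂ) * (a i * star (a k)) * ((t:ℂ) * (a k * star (a j)))
        = ((t:ℂ) * (a i * star (a j))) * ((t:ℂ) * ∑ k, a k * star (a k)) := by
          rw [Finset.mul_sum, Finset.mul_sum]
          exact Finset.sum_congr rfl fun k _ => by ring
      _ = (t:ℂ) * (a i * star (a j)) := by rw [hnorm, mul_one]

lemma pure_decomp {n : Type*} [Fintype n] [DecidableEq n]
    (M : Matrix n n ℂ) (h : IsPureState M) :
    ∃ v : n → ℂ, (∀ i j, M i j = v i * star (v j)) ∧ ∑ i, v i * star (v i) = 1 := by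
  classical
  obtain ⟨hherm, hidem, hrank⟩ := h
  rw [Matrix.rank, finrank_eq_one_iff'] at hrank
  obtain ⟨⟨v₀, hv₀mem⟩, hv₀ne, hspan⟩ := hrank
  have hv₀ : v₀ ≠ 0 := fun hcon => hv₀ne (Subtype.ext hcon)
  have hcol : ∀ j, ∃ c : ℂ, ∀ i, M i j = c * v₀ i := by
    intro j
    have hmem : M.mulVec (Pi.single j 1) ∈ LinearMap.range M.mulVecLin :=
      ⟨Pi.single j 1, rfl⟩
    obtain ⟨c, hc⟩ := hspan ⟨M.mulVec (Pi.single j 1), hmem⟩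
    refine ⟨c, fun i => ?_⟩
    have h2 := congrFun (congrArg Subtype.val hc) i
    simp only [Submodule.coe_smul, Pi.smul_apply, smul_eq_mul, Matrix.mulVec_single,
      mul_one, MulOpposite.op_one, one_smul, Matrix.col_apply] at h2
    exact h2.symm
  choose cc hcc using hcol
  obtain ⟨i₀, hi₀⟩ := Function.ne_iff.mp hv₀
  simp only [Pi.zero_apply] at hi₀
  set μ : ℂ := star (cc i₀) / v₀ i₀ with hμ
  have hccj : ∀ j, cc j = μ * star (v₀ j) := by
    intro j
    have hH : M j i₀ = star (M i₀ j) := (hherm.apply j i₀).symm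
    rw [hcc i₀ j, hcc j i₀] at hH
    have h3 : star (cc i₀ * v₀ j) = cc j * v₀ i₀ := by
      rw [hH]; simp [star_mul', star_star]
    field_simp [hμ]
    rw [hμ, div_mul_eq_mul_div, eq_div_iff hi₀, ← star_mul', h3]
  have hMij : ∀ i j, M i j = μ * (v₀ i * star (v₀ j)) := by
    intro i j
    rw [hcc j i, hccj j]; ring
  have hμ0 : μ ≠ 0 := by
    intro hcon
    apply hv₀
    have hM0 : M = 0 := by
      ext i j; rw [hMij, hcon]; simp
    obtain ⟨x, hx⟩ := hv₀mem
    rw [← hx, Matrix.mulVecLin_apply, hM0]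
    simp
  have hM00 : M i₀ i₀ ≠ 0 := by
    rw [hMij]
    exact mul_ne_zero hμ0 (mul_ne_zero hi₀ (star_ne_zero.mpr hi₀))
  have hSmu : μ * ∑ i, v₀ i * star (v₀ i) = 1 := by
    have hid := congrFun (congrFun hidem i₀) i₀
    simp only [Matrix.mul_apply] at hid
    have hl : ∑ k, M i₀ k * M k i₀ = (μ * ∑ i, v₀ i * star (v₀ i)) * M i₀ i₀ := by
      calc ∑ k, M i₀ k * M k i₀
          = ∑ k, (μ * (v₀ i₀ * star (v₀ k))) * (μ * (v₀ k * star (v₀ i₀))) :=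
            Finset.sum_congr rfl fun k _ => by rw [hMij, hMij]
        _ = (μ * ∑ i, v₀ i * star (v₀ i)) * (μ * (v₀ i₀ * star (v₀ i₀))) := by
            rw [Finset.mul_sum, Finset.sum_mul]
            exact Finset.sum_congr rfl fun k _ => by ring
        _ = (μ * ∑ i, v₀ i * star (v₀ i)) * M i₀ i₀ := by rw [hMij]
    rw [hl] at hid
    have h1 : (μ * ∑ i, v₀ i * star (v₀ i)) * M i₀ i₀ = 1 * M i₀ i₀ := by
      rw [one_mul]; exact hid
    exact mul_right_cancel₀ hM00 h1
  have hSr : (∑ i, v₀ i * star (v₀ i)) = ((∑ i, Complex.normSq (v₀ i) : ℝ) : ℂ) :=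
    sum_mul_star_eq v₀
  set Sr : ℝ := ∑ i, Complex.normSq (v₀ i) with hSrdef
  have hSrpos : 0 < Sr := by
    have hnn : 0 ≤ Sr := Finset.sum_nonneg fun i _ => Complex.normSq_nonneg _
    rcases hnn.lt_or_eq with hlt | heq
    · exact hlt
    · exact absurd (sumNormSq_zero heq.symm i₀) hi₀
  have hSrC : (Sr : ℂ) ≠ 0 := by
    norm_cast
    exact hSrpos.ne'
  have hμval : μ = ((Sr⁻¹ : ℝ) : ℂ) := by
    have h1 : μ * (Sr : ℂ) = 1 := by rw [← hSmu, hSr]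
    have h2 := congrArg (· * ((Sr:ℂ))⁻¹) h1
    simp only [mul_assoc, mul_inv_cancel₀ hSrC, mul_one, one_mul] at h2
    rw [h2]
    push_cast
    ring
  set s : ℝ := Real.sqrt Sr⁻¹ with hs
  have hstars : star ((s:ℝ):ℂ) = ((s:ℝ):ℂ) := Complex.conj_ofReal s
  have hs2 : ((s:ℝ):ℂ) * ((s:ℝ):ℂ) = ((Sr⁻¹:ℝ):ℂ) := by
    norm_cast
    exact Real.mul_self_sqrt (inv_nonneg.mpr hSrpos.le)
  refine ⟨fun i => ((s:ℝ):ℂ) * v₀ i, ?_, ?_⟩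
  · intro i j
    rw [hMij, hμval, ← hs2, star_mul', hstars]
    ring
  · have hsum : ∑ i, (((s:ℝ):ℂ) * v₀ i) * star (((s:ℝ):ℂ) * v₀ i)
        = (((s:ℝ):ℂ) * ((s:ℝ):ℂ)) * ∑ i, v₀ i * star (v₀ i) := by
      rw [Finset.mul_sum]
      exact Finset.sum_congr rfl fun i _ => by rw [star_mul', hstars]; ring
    rw [hsum, hs2, hSr]
    norm_cast
    field_simp

/-- If two pure bipartite density matrices agree on the middle system and
admit a joint extension to the three-partite system, then both are product states built
from pure states on the individual factors. -/
theorem pure_overlapping_extension_product (d₁ d₂ d₃ : ℕ)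
    (ρ12 : Matrix (Fin d₁ × Fin d₂) (Fin d₁ × Fin d₂) ℂ) (h12 : IsPureState ρ12)
    (σ23 : Matrix (Fin d₂ × Fin d₃) (Fin d₂ × Fin d₃) ℂ) (h23 : IsPureState σ23)
    (hmid : ∀ k k' : Fin d₂, (∑ i, ρ12 (i, k) (i, k')) = ∑ m, σ23 (k, m) (k', m))
    (hext : ∃ ρ : Matrix (Fin d₁ × Fin d₂ × Fin d₃) (Fin d₁ × Fin d₂ × Fin d₃) ℂ,
      ρ.PosSemidef ∧ ρ.trace = 1 ∧
      (∀ i k i' k', (∑ m, ρ (i, k, m) (i', k', m)) = ρ12 (i, k) (i', k')) ∧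
      (∀ k m k' m', (∑ i, ρ (i, k, m) (i, k', m')) = σ23 (k, m) (k', m'))) :
    ∃ (ρ₁ : Matrix (Fin d₁) (Fin d₁) ℂ) (ρ₂ : Matrix (Fin d₂) (Fin d₂) ℂ)
      (ρ₃ : Matrix (Fin d₃) (Fin d₃) ℂ),
      IsPureState ρ₁ ∧ IsPureState ρ₂ ∧ IsPureState ρ₃ ∧
      ρ12 = ρ₁ ⊗ₖ ρ₂ ∧ σ23 = ρ₂ ⊗ₖ ρ₃ := by
  classical
  obtain ⟨v, hv, hvnorm⟩ := pure_decomp ρ12 h12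
  obtain ⟨w, hw, hwnorm⟩ := pure_decomp σ23 h23
  have hvne : v ≠ 0 := by
    intro hc; rw [hc] at hvnorm; simp at hvnorm
  have hwne : w ≠ 0 := by
    intro hc; rw [hc] at hwnorm; simp at hwnorm
  obtain ⟨ρ, hpsd, htr, h3, h1⟩ := hext
  obtain ⟨B, hB⟩ : ∃ B : Matrix _ _ ℂ, ρ = B.conjTranspose * B := by
    open MatrixOrder in exact CStarAlgebra.nonneg_iff_eq_star_mul_self.mp hpsd.nonneg
  have hρ : ∀ x y, ρ x y = ∑ s, star (B s x) * B s y := by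
    intro x y
    rw [hB, Matrix.mul_apply]
    exact Finset.sum_congr rfl fun s _ => by rw [Matrix.conjTranspose_apply]
  -- Gram factorization over third index
  obtain ⟨c, hcfact⟩ := gram_factor
    (fun (a : (Fin d₁ × Fin d₂ × Fin d₃) × Fin d₃) (x : Fin d₁ × Fin d₂) =>
      star (B a.1 (x.1, x.2, a.2))) v hvne (by
    intro x y
    calc ∑ a : (Fin d₁ × Fin d₂ × Fin d₃) × Fin d₃,
          star (B a.1 (x.1, x.2, a.2)) * star (star (B a.1 (y.1, y.2, a.2)))
        = ∑ s, ∑ m, star (B s (x.1, x.2, m)) * B s (y.1, y.2, m) := by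
          rw [Fintype.sum_prod_type]
          exact Finset.sum_congr rfl fun s _ => Finset.sum_congr rfl fun m _ => by
            rw [star_star]
      _ = ∑ m, ∑ s, star (B s (x.1, x.2, m)) * B s (y.1, y.2, m) := Finset.sum_comm
      _ = ∑ m, ρ (x.1, x.2, m) (y.1, y.2, m) :=
            Finset.sum_congr rfl fun m _ => (hρ _ _).symm
      _ = ρ12 (x.1, x.2) (y.1, y.2) := h3 x.1 x.2 y.1 y.2
      _ = v x * star (v y) := hv x y)
  -- Gram factorization over first index
  obtain ⟨e, hefact⟩ := gram_factor
    (fun (a : (Fin d₁ × Fin d₂ × Fin d₃) × Fin d₁) (x : Fin d₂ × Fin d₃) =>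
      star (B a.1 (a.2, x.1, x.2))) w hwne (by
    intro x y
    calc ∑ a : (Fin d₁ × Fin d₂ × Fin d₃) × Fin d₁,
          star (B a.1 (a.2, x.1, x.2)) * star (star (B a.1 (a.2, y.1, y.2)))
        = ∑ s, ∑ i, star (B s (i, x.1, x.2)) * B s (i, y.1, y.2) := by
          rw [Fintype.sum_prod_type]
          exact Finset.sum_congr rfl fun s _ => Finset.sum_congr rfl fun i _ => by
            rw [star_star]
      _ = ∑ i, ∑ s, star (B s (i, x.1, x.2)) * B s (i, y.1, y.2) := Finset.sum_comm
      _ = ∑ i, ρ (i, x.1, x.2) (i, y.1, y.2) :=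
            Finset.sum_congr rfl fun i _ => (hρ _ _).symm
      _ = σ23 (x.1, x.2) (y.1, y.2) := h1 x.1 x.2 y.1 y.2
      _ = w x * star (w y) := hw x y)
  have hc' : ∀ s i k m, star (B s (i, k, m)) = c (s, m) * v (i, k) :=
    fun s i k m => hcfact (s, m) (i, k)
  have he' : ∀ s i k m, star (B s (i, k, m)) = e (s, i) * w (k, m) :=
    fun s i k m => hefact (s, i) (k, m)
  have hkey : ∀ s i k m, c (s, m) * v (i, k) = e (s, i) * w (k, m) := by
    intro s i k m
    rw [← hc' s i k m, he' s i k m]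
  -- trace of ρ is 1, hence B ≠ 0, hence c and e are not identically zero
  have hBne : ∃ s x, B s x ≠ 0 := by
    by_contra hall
    push_neg at hall
    have hB0 : B = 0 := by
      ext s x; exact hall s x
    rw [hB0] at hB
    simp only [Matrix.conjTranspose_zero, Matrix.zero_mul] at hB
    rw [hB] at htr
    simp [Matrix.trace] at htr
  have hcnz : ∃ s m, c (s, m) ≠ 0 := by
    obtain ⟨s, x, hx⟩ := hBne
    refine ⟨s, x.2.2, fun hc0 => hx ?_⟩
    have := hc' s x.1 x.2.1 x.2.2
    rw [hc0, zero_mul] at this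
    exact star_eq_zero.mp this
  have henz : ∃ s i, e (s, i) ≠ 0 := by
    obtain ⟨s, x, hx⟩ := hBne
    refine ⟨s, x.1, fun he0 => hx ?_⟩
    have := he' s x.1 x.2.1 x.2.2
    rw [he0, zero_mul] at this
    exact star_eq_zero.mp this
  obtain ⟨s₀, m₀, hc0⟩ := hcnz
  obtain ⟨s₁, i₁, he1⟩ := henz
  set f : Fin d₁ → ℂ := fun i => e (s₀, i) / c (s₀, m₀) with hf
  set g : Fin d₂ → ℂ := fun k => w (k, m₀) with hg
  set g' : Fin d₂ → ℂ := fun k => v (i₁, k) / e (s₁, i₁) with hg'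
  set hh : Fin d₃ → ℂ := fun m => c (s₁, m) with hhdef
  have hvfg : ∀ i k, v (i, k) = f i * g k := by
    intro i k
    have hk := hkey s₀ i k m₀
    have h2 : v (i, k) * c (s₀, m₀) = (f i * g k) * c (s₀, m₀) := by
      rw [hf, hg]
      field_simp
      linear_combination hk
    exact mul_right_cancel₀ hc0 h2
  have hwgh : ∀ k m, w (k, m) = g' k * hh m := by
    intro k m
    have hk := hkey s₁ i₁ k m
    have h2 : w (k, m) * e (s₁, i₁) = (g' k * hh m) * e (s₁, i₁) := by
      rw [hg', hhdef]
      field_simp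
      linear_combination -hk
    exact mul_right_cancel₀ he1 h2
  -- nonvanishing of components
  obtain ⟨xv, hxv⟩ := Function.ne_iff.mp hvne
  have hxv' : f xv.1 ≠ 0 ∧ g xv.2 ≠ 0 := by
    have := hvfg xv.1 xv.2
    constructor
    · intro h0; apply hxv; rw [show v xv = v (xv.1, xv.2) from rfl, this, h0]; simp
    · intro h0; apply hxv; rw [show v xv = v (xv.1, xv.2) from rfl, this, h0]; simp
  obtain ⟨xw, hxw⟩ := Function.ne_iff.mp hwne
  have hxw' : g' xw.1 ≠ 0 ∧ hh xw.2 ≠ 0 := by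
    have := hwgh xw.1 xw.2
    constructor
    · intro h0; apply hxw; rw [show w xw = w (xw.1, xw.2) from rfl, this, h0]; simp
    · intro h0; apply hxw; rw [show w xw = w (xw.1, xw.2) from rfl, this, h0]; simp
  have hfne : f ≠ 0 := fun hcon => hxv'.1 (by rw [hcon]; rfl)
  have hgne : g ≠ 0 := fun hcon => hxv'.2 (by rw [hcon]; rfl)
  have hg'ne : g' ≠ 0 := fun hcon => hxw'.1 (by rw [hcon]; rfl)
  have hhne : hh ≠ 0 := fun hcon => hxw'.2 (by rw [hcon]; rfl)
  -- real squared norms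
  set Fr : ℝ := ∑ i, Complex.normSq (f i) with hFrdef
  set Gr : ℝ := ∑ k, Complex.normSq (g k) with hGrdef
  set G'r : ℝ := ∑ k, Complex.normSq (g' k) with hG'rdef
  set Hr : ℝ := ∑ m, Complex.normSq (hh m) with hHrdef
  have hFc : ∑ i, f i * star (f i) = ((Fr : ℝ) : ℂ) := sum_mul_star_eq f
  have hGc : ∑ k, g k * star (g k) = ((Gr : ℝ) : ℂ) := sum_mul_star_eq g
  have hG'c : ∑ k, g' k * star (g' k) = ((G'r : ℝ) : ℂ) := sum_mul_star_eq g'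
  have hHc : ∑ m, hh m * star (hh m) = ((Hr : ℝ) : ℂ) := sum_mul_star_eq hh
  -- (A) : Fr * Gr = 1
  have hA : ((Fr : ℝ) : ℂ) * ((Gr : ℝ) : ℂ) = 1 := by
    rw [← hFc, ← hGc, ← hvnorm, Fintype.sum_prod_type, Finset.sum_mul_sum]
    refine Finset.sum_congr rfl fun i _ => Finset.sum_congr rfl fun k _ => ?_
    rw [hvfg i k, star_mul']
    ring
  -- (C) : G'r * Hr = 1
  have hC : ((G'r : ℝ) : ℂ) * ((Hr : ℝ) : ℂ) = 1 := by
    rw [← hG'c, ← hHc, ← hwnorm, Fintype.sum_prod_type, Finset.sum_mul_sum]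
    refine Finset.sum_congr rfl fun k _ => Finset.sum_congr rfl fun m _ => ?_
    rw [hwgh k m, star_mul']
    ring
  have hArr : Fr * Gr = 1 := by exact_mod_cast hA
  have hCrr : G'r * Hr = 1 := by exact_mod_cast hC
  have hFr0 : Fr ≠ 0 := left_ne_zero_of_mul_eq_one hArr
  have hGr0 : Gr ≠ 0 := right_ne_zero_of_mul_eq_one hArr
  have hG'r0 : G'r ≠ 0 := left_ne_zero_of_mul_eq_one hCrr
  have hHr0 : Hr ≠ 0 := right_ne_zero_of_mul_eq_one hCrr
  -- (B) : middle marginal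
  have hmid' : ∀ k k', ((Fr : ℝ) : ℂ) * (g k * star (g k'))
      = ((Hr : ℝ) : ℂ) * (g' k * star (g' k')) := by
    intro k k'
    have h0 := hmid k k'
    have hl : ∑ i, ρ12 (i, k) (i, k') = ((Fr : ℝ) : ℂ) * (g k * star (g k')) := by
      rw [← hFc, Finset.sum_mul]
      refine Finset.sum_congr rfl fun i _ => ?_
      rw [hv (i, k) (i, k'), hvfg i k, hvfg i k', star_mul']
      ring
    have hr : ∑ m, σ23 (k, m) (k', m) = ((Hr : ℝ) : ℂ) * (g' k * star (g' k')) := by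
      rw [← hHc, Finset.sum_mul]
      refine Finset.sum_congr rfl fun m _ => ?_
      rw [hw (k, m) (k', m), hwgh k m, hwgh k' m, star_mul']
      ring
    rw [← hl, ← hr, h0]
  -- define the three states
  refine ⟨Matrix.of fun i i' => ((Fr⁻¹ : ℝ) : ℂ) * (f i * star (f i')),
          Matrix.of fun k k' => ((Fr : ℝ) : ℂ) * (g k * star (g k')),
          Matrix.of fun m m' => ((Hr⁻¹ : ℝ) : ℂ) * (hh m * star (hh m')),
          ?_, ?_, ?_, ?_, ?_⟩
  · refine pure_of f Fr⁻¹ hfne (inv_ne_zero hFr0) ?_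
    rw [hFc]
    push_cast
    field_simp
  · refine pure_of g Fr hgne hFr0 ?_
    rw [hGc]
    exact_mod_cast hA
  · refine pure_of hh Hr⁻¹ hhne (inv_ne_zero hHr0) ?_
    rw [hHc]
    push_cast
    field_simp
  · ext x y
    have hinv : ((Fr⁻¹ : ℝ) : ℂ) * ((Fr : ℝ) : ℂ) = 1 := by
      push_cast
      field_simp
    rw [Matrix.kroneckerMap_apply, hv x y, Matrix.of_apply, Matrix.of_apply]
    rw [show v x = v (x.1, x.2) from rfl, show v y = v (y.1, y.2) from rfl,
      hvfg x.1 x.2, hvfg y.1 y.2, star_mul']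
    rw [show (((Fr⁻¹ : ℝ) : ℂ) * (f x.1 * star (f y.1))) * (((Fr : ℝ) : ℂ) * (g x.2 * star (g y.2)))
        = (((Fr⁻¹ : ℝ) : ℂ) * ((Fr : ℝ) : ℂ)) * ((f x.1 * star (f y.1)) * (g x.2 * star (g y.2)))
        from by ring, hinv, one_mul]
    ring
  · ext x y
    have hinv : ((Hr⁻¹ : ℝ) : ℂ) * ((Hr : ℝ) : ℂ) = 1 := by
      push_cast
      field_simp
    have hB2 := hmid' x.1 y.1
    rw [Matrix.kroneckerMap_apply, hw x y, Matrix.of_apply, Matrix.of_apply]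
    rw [show w x = w (x.1, x.2) from rfl, show w y = w (y.1, y.2) from rfl,
      hwgh x.1 x.2, hwgh y.1 y.2, star_mul', hB2]
    rw [show (((Hr : ℝ) : ℂ) * (g' x.1 * star (g' y.1))) * (((Hr⁻¹ : ℝ) : ℂ) * (hh x.2 * star (hh y.2)))
        = (((Hr⁻¹ : ℝ) : ℂ) * ((Hr : ℝ) : ℂ)) * ((g' x.1 * star (g' y.1)) * (hh x.2 * star (hh y.2)))
        from by ring, hinv, one_mul]
    ring
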